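/- For nonnegative n×n matrices K₁,…,K_m and t ≥ 1, r(K₁^(t) ⋯ K_m^(t)) ≤ r(K₁ ⋯ K_m)^t, where A^(t) is the entrywise t-th power and r is the spectral radius. -/

import Mathlib

open scoped ENNReal
open Finset
set_option maxHeartbeats 1000000
set_option synthInstance.maxHeartbeats 1000000
noncomputable def specRad {n : ℕ} (A : Matrix (Fin n) (Fin n) ℝ) : ℝ≥0∞ :=
  spectralRadius ℂ (A.map (algebraMap ℝ ℂ))
noncomputable def opNorm {n : ℕ} (A : Matrix (Fin n) (Fin n) ℝ) : ℝ :=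
  ‖Matrix.toEuclideanCLM (𝕜 := ℝ) A‖

section Aux

open Filter

lemma aux_add_rpow {t : ℝ} (ht : 1 ≤ t) {a b : ℝ} (ha : 0 ≤ a) (hb : 0 ≤ b) :
    a ^ t + b ^ t ≤ (a + b) ^ t := by
  have h := NNReal.add_rpow_le_rpow_add a.toNNReal b.toNNReal ht
  have := NNReal.coe_le_coe.2 h
  simpa [NNReal.coe_rpow, Real.coe_toNNReal, ha, hb, Real.toNNReal_add ha hb] using this

lemma aux_sum_rpow {t : ℝ} (ht : 1 ≤ t) {ι : Type*} (s : Finset ι) (f : ι → ℝ)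
    (hf : ∀ i ∈ s, 0 ≤ f i) : ∑ i ∈ s, f i ^ t ≤ (∑ i ∈ s, f i) ^ t := by
  classical
  induction s using Finset.cons_induction with
  | empty => simp [Real.zero_rpow (by linarith : t ≠ 0)]
  | cons a s ha ih =>
    have h0 : 0 ≤ f a := hf a (by simp)
    have h1 : ∀ i ∈ s, 0 ≤ f i := fun i hi => hf i (by simp [hi])
    have h2 : 0 ≤ ∑ i ∈ s, f i := Finset.sum_nonneg h1
    rw [Finset.sum_cons, Finset.sum_cons]
    calc f a ^ t + ∑ i ∈ s, f i ^ t ≤ f a ^ t + (∑ i ∈ s, f i) ^ t := by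
          gcongr; exact ih h1
      _ ≤ (f a + ∑ i ∈ s, f i) ^ t := aux_add_rpow ht h0 h2

/-- key multiplicative step -/
lemma aux_mul_le {n : ℕ} {t : ℝ} (ht : 1 ≤ t) {Q P Q' P' : Matrix (Fin n) (Fin n) ℝ}
    (hP : ∀ i j, 0 ≤ P i j) (hP' : ∀ i j, 0 ≤ P' i j)
    (hQ : ∀ i j, 0 ≤ Q i j) (hQ' : ∀ i j, 0 ≤ Q' i j)
    (h1 : ∀ i j, Q i j ≤ P i j ^ t) (h2 : ∀ i j, Q' i j ≤ P' i j ^ t) (i j : Fin n) :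
    (Q * Q') i j ≤ ((P * P') i j) ^ t := by
  rw [Matrix.mul_apply, Matrix.mul_apply]
  calc ∑ k, Q i k * Q' k j ≤ ∑ k, (P i k * P' k j) ^ t := by
        refine Finset.sum_le_sum fun k _ => ?_
        rw [Real.mul_rpow (hP i k) (hP' k j)]
        exact mul_le_mul (h1 i k) (h2 k j) (hQ' k j) (Real.rpow_nonneg (hP i k) t)
    _ ≤ (∑ k, P i k * P' k j) ^ t :=
        aux_sum_rpow ht _ _ fun k _ => mul_nonneg (hP i k) (hP' k j)

lemma aux_one_le {n : ℕ} {t : ℝ} (ht : 1 ≤ t) (i j : Fin n) :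
    (1 : Matrix (Fin n) (Fin n) ℝ) i j ≤ ((1 : Matrix (Fin n) (Fin n) ℝ) i j) ^ t := by
  rcases eq_or_ne i j with h | h
  · subst h; simp [Matrix.one_apply_eq, Real.one_rpow]
  · simp [Matrix.one_apply_ne h, Real.zero_rpow (by linarith : t ≠ 0)]

lemma aux_one_nonneg {n : ℕ} (i j : Fin n) : (0:ℝ) ≤ (1 : Matrix (Fin n) (Fin n) ℝ) i j := by
  rcases eq_or_ne i j with h | h
  · subst h; simp [Matrix.one_apply_eq]
  · simp [Matrix.one_apply_ne h]

lemma aux_mul_nonneg {n : ℕ} {Q Q' : Matrix (Fin n) (Fin n) ℝ}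
    (hQ : ∀ i j, 0 ≤ Q i j) (hQ' : ∀ i j, 0 ≤ Q' i j) (i j : Fin n) :
    0 ≤ (Q * Q') i j := by
  rw [Matrix.mul_apply]
  exact Finset.sum_nonneg fun k _ => mul_nonneg (hQ i k) (hQ' k j)

lemma aux_prod_nonneg {n : ℕ} (L : List (Matrix (Fin n) (Fin n) ℝ))
    (h : ∀ A ∈ L, ∀ i j, 0 ≤ A i j) : ∀ i j, 0 ≤ L.prod i j := by
  induction L with
  | nil => simpa using aux_one_nonneg
  | cons A L ih =>
    rw [List.prod_cons]
    exact aux_mul_nonneg (h A (by simp)) (ih fun B hB => h B (by simp [hB]))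

lemma aux_prod_le {n : ℕ} {t : ℝ} (ht : 1 ≤ t) (L : List (Matrix (Fin n) (Fin n) ℝ))
    (h : ∀ A ∈ L, ∀ i j, 0 ≤ A i j) : ∀ i j,
    (L.map (fun A => Matrix.of fun i j => A i j ^ t)).prod i j ≤ (L.prod i j) ^ t := by
  induction L with
  | nil => simpa using aux_one_le ht
  | cons A L ih =>
    have hA : ∀ i j, 0 ≤ A i j := h A (by simp)
    have hL : ∀ B ∈ L, ∀ i j, 0 ≤ B i j := fun B hB => h B (by simp [hB])
    rw [List.map_cons, List.prod_cons, List.prod_cons]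
    exact aux_mul_le ht hA (aux_prod_nonneg L hL)
      (fun i j => Real.rpow_nonneg (hA i j) t)
      (aux_prod_nonneg _ (by
        intro B hB i j
        simp only [List.mem_map] at hB
        obtain ⟨C, hC, rfl⟩ := hB
        exact Real.rpow_nonneg (hL C hC i j) t))
      (fun i j => le_refl _) (ih hL)

lemma aux_pow_nonneg {n : ℕ} {Q : Matrix (Fin n) (Fin n) ℝ}
    (hQ : ∀ i j, 0 ≤ Q i j) (k : ℕ) : ∀ i j, 0 ≤ (Q ^ k) i j := by
  induction k with
  | zero => simpa using aux_one_nonneg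
  | succ k ih => rw [pow_succ]; exact aux_mul_nonneg ih hQ

lemma aux_pow_le {n : ℕ} {t : ℝ} (ht : 1 ≤ t) {Q P : Matrix (Fin n) (Fin n) ℝ}
    (hP : ∀ i j, 0 ≤ P i j) (hQ : ∀ i j, 0 ≤ Q i j)
    (hQP : ∀ i j, Q i j ≤ P i j ^ t) (k : ℕ) :
    ∀ i j, (Q ^ k) i j ≤ ((P ^ k) i j) ^ t := by
  induction k with
  | zero => simpa using aux_one_le ht
  | succ k ih =>
    rw [pow_succ, pow_succ]
    exact aux_mul_le ht (aux_pow_nonneg hP k) hP (aux_pow_nonneg hQ k) hQ ih hQP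

-- Euclidean space norm facts
lemma aux_coord_le {n : ℕ} (x : EuclideanSpace ℂ (Fin n)) (i : Fin n) : ‖x i‖ ≤ ‖x‖ := by
  rw [EuclideanSpace.norm_eq]
  rw [show ‖x i‖ = Real.sqrt (‖x i‖ ^ 2) from (Real.sqrt_sq (norm_nonneg _)).symm]
  apply Real.sqrt_le_sqrt
  exact Finset.single_le_sum (f := fun j => ‖x j‖ ^ 2) (fun j _ => by positivity) (by simp)

lemma aux_l2_le_l1 {n : ℕ} (x : EuclideanSpace ℂ (Fin n)) : ‖x‖ ≤ ∑ i, ‖x i‖ := by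
  have h1 : ∑ i, ‖x i‖ ^ 2 ≤ (∑ i, ‖x i‖) ^ 2 := by
    rw [sq (∑ i, ‖x i‖), Finset.sum_mul]
    refine Finset.sum_le_sum fun i _ => ?_
    rw [sq]
    exact mul_le_mul_of_nonneg_left
      (Finset.single_le_sum (f := fun j => ‖x j‖) (fun j _ => norm_nonneg _) (by simp))
      (norm_nonneg _)
  calc ‖x‖ = Real.sqrt (∑ i, ‖x i‖ ^ 2) := EuclideanSpace.norm_eq x
    _ ≤ Real.sqrt ((∑ i, ‖x i‖) ^ 2) := Real.sqrt_le_sqrt h1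
    _ = ∑ i, ‖x i‖ := Real.sqrt_sq (Finset.sum_nonneg fun i _ => norm_nonneg _)

lemma aux_clm_apply {n : ℕ} (M : Matrix (Fin n) (Fin n) ℂ) (x : EuclideanSpace ℂ (Fin n))
    (i : Fin n) : (Matrix.toEuclideanCLM (𝕜 := ℂ) M x) i = ∑ j, M i j * x j := by
  have h := congrFun (Matrix.ofLp_toEuclideanCLM (𝕜 := ℂ) M x) i
  simpa [Matrix.toLin'_apply, Matrix.mulVec, dotProduct] using h

lemma aux_entry_le {n : ℕ} (M : Matrix (Fin n) (Fin n) ℂ) (i j : Fin n) :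
    ‖M i j‖ ≤ ‖Matrix.toEuclideanCLM (𝕜 := ℂ) M‖ := by
  set v : EuclideanSpace ℂ (Fin n) := EuclideanSpace.single j 1 with hv
  have h1 : (Matrix.toEuclideanCLM (𝕜 := ℂ) M v) i = M i j := by
    rw [aux_clm_apply]
    rw [Finset.sum_eq_single j]
    · simp [hv, EuclideanSpace.single_apply]
    · intro b _ hb; simp [hv, EuclideanSpace.single_apply, hb]
    · simp
  calc ‖M i j‖ = ‖(Matrix.toEuclideanCLM (𝕜 := ℂ) M v) i‖ := by rw [h1]
    _ ≤ ‖Matrix.toEuclideanCLM (𝕜 := ℂ) M v‖ := aux_coord_le _ _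
    _ ≤ ‖Matrix.toEuclideanCLM (𝕜 := ℂ) M‖ * ‖v‖ := (Matrix.toEuclideanCLM (𝕜 := ℂ) M).le_opNorm v
    _ = ‖Matrix.toEuclideanCLM (𝕜 := ℂ) M‖ := by
        rw [hv, EuclideanSpace.norm_single]; simp

lemma aux_opNorm_le {n : ℕ} (M : Matrix (Fin n) (Fin n) ℂ) :
    ‖Matrix.toEuclideanCLM (𝕜 := ℂ) M‖ ≤ ∑ i, ∑ j, ‖M i j‖ := by
  refine ContinuousLinearMap.opNorm_le_bound _
    (Finset.sum_nonneg fun i _ => Finset.sum_nonneg fun j _ => norm_nonneg _) fun x => ?_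
  calc ‖Matrix.toEuclideanCLM (𝕜 := ℂ) M x‖
      ≤ ∑ i, ‖(Matrix.toEuclideanCLM (𝕜 := ℂ) M x) i‖ := aux_l2_le_l1 _
    _ ≤ ∑ i, ∑ j, ‖M i j‖ * ‖x‖ := by
        refine Finset.sum_le_sum fun i _ => ?_
        rw [aux_clm_apply]
        calc ‖∑ j, M i j * x j‖ ≤ ∑ j, ‖M i j * x j‖ := norm_sum_le _ _
          _ ≤ ∑ j, ‖M i j‖ * ‖x‖ := by
              refine Finset.sum_le_sum fun j _ => ?_
              rw [norm_mul]
              exact mul_le_mul_of_nonneg_left (aux_coord_le x j) (norm_nonneg _)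
    _ = (∑ i, ∑ j, ‖M i j‖) * ‖x‖ := by rw [Finset.sum_mul]; simp [Finset.sum_mul]

lemma aux_specRad_eq {n : ℕ} (M : Matrix (Fin n) (Fin n) ℂ) :
    spectralRadius ℂ (Matrix.toEuclideanCLM (𝕜 := ℂ) M) = spectralRadius ℂ M := by
  simp [spectralRadius, AlgEquiv.spectrum_eq]

set_option maxHeartbeats 1000000 in
set_option synthInstance.maxHeartbeats 400000 in
/-- The main analytic lemma. -/
lemma aux_main {n : ℕ} {Q P : Matrix (Fin n) (Fin n) ℝ} {t : ℝ} (ht : 1 ≤ t)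
    (hP : ∀ i j, 0 ≤ P i j) (hQ : ∀ i j, 0 ≤ Q i j)
    (hQP : ∀ i j, Q i j ≤ P i j ^ t) :
    specRad Q ≤ specRad P ^ t := by
  classical
  have ht' : (0:ℝ) ≤ t := by linarith
  set f : ℝ →+* ℂ := algebraMap ℝ ℂ with hf
  set a := Matrix.toEuclideanCLM (𝕜 := ℂ) (P.map f) with hadef
  set b := Matrix.toEuclideanCLM (𝕜 := ℂ) (Q.map f) with hbdef
  have hmap : ∀ (X : Matrix (Fin n) (Fin n) ℝ) (k : ℕ),
      (Matrix.toEuclideanCLM (𝕜 := ℂ) (X.map f)) ^ k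
        = Matrix.toEuclideanCLM (𝕜 := ℂ) ((X ^ k).map f) := by
    intro X k
    rw [← map_pow, show (X.map f) = f.mapMatrix X from rfl, ← map_pow, RingHom.mapMatrix_apply]
  have hnorm_entry : ∀ (X : Matrix (Fin n) (Fin n) ℝ) (i j : Fin n),
      ‖(X.map f) i j‖ = |X i j| := by
    intro X i j
    simp [Matrix.map_apply, hf, Complex.norm_real]
  set C : ℝ := (n : ℝ) ^ 2 + 1 with hC
  have hC0 : (0:ℝ) < C := by positivity
  -- the key norm inequality
  have hreal : ∀ k : ℕ, ‖b ^ k‖ ≤ C * ‖a ^ k‖ ^ t := by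
    intro k
    have hPk := aux_pow_nonneg hP k
    have hQk := aux_pow_nonneg hQ k
    have hQPk := aux_pow_le ht hP hQ hQP k
    have hPa : ∀ i j, (P ^ k) i j ≤ ‖a ^ k‖ := by
      intro i j
      have h1 : ‖((P ^ k).map f) i j‖ ≤ ‖a ^ k‖ := by
        rw [hadef, hmap]; exact aux_entry_le _ i j
      rwa [hnorm_entry, abs_of_nonneg (hPk i j)] at h1
    calc ‖b ^ k‖ ≤ ∑ i, ∑ j, ‖((Q ^ k).map f) i j‖ := by
          rw [hbdef, hmap]; exact aux_opNorm_le _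
      _ = ∑ i, ∑ j, (Q ^ k) i j := by
          refine Finset.sum_congr rfl fun i _ => Finset.sum_congr rfl fun j _ => ?_
          rw [hnorm_entry, abs_of_nonneg (hQk i j)]
      _ ≤ ∑ i, ∑ j, ‖a ^ k‖ ^ t := by
          refine Finset.sum_le_sum fun i _ => Finset.sum_le_sum fun j _ => ?_
          exact (hQPk i j).trans (Real.rpow_le_rpow (hPk i j) (hPa i j) ht')
      _ = (n : ℝ) ^ 2 * ‖a ^ k‖ ^ t := by simp [sq]; ring
      _ ≤ C * ‖a ^ k‖ ^ t := by
          have : (0:ℝ) ≤ ‖a ^ k‖ ^ t := Real.rpow_nonneg (norm_nonneg _) t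
          nlinarith
  -- pass to ℝ≥0∞
  have key : ∀ k : ℕ, (‖b ^ k‖₊ : ℝ≥0∞) ^ (1 / (k:ℝ)) ≤
      (ENNReal.ofReal C) ^ (1 / (k:ℝ)) * (((‖a ^ k‖₊ : ℝ≥0∞)) ^ (1 / (k:ℝ))) ^ t := by
    intro k
    have h1 : (‖b ^ k‖₊ : ℝ≥0∞) ≤ ENNReal.ofReal C * ((‖a ^ k‖₊ : ℝ≥0∞)) ^ t := by
      rw [← enorm_eq_nnnorm, ← ofReal_norm, ← enorm_eq_nnnorm, ← ofReal_norm,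
        ENNReal.ofReal_rpow_of_nonneg (norm_nonneg _) ht', ← ENNReal.ofReal_mul hC0.le]
      exact ENNReal.ofReal_le_ofReal (hreal k)
    have h2 := ENNReal.rpow_le_rpow h1 (by positivity : (0:ℝ) ≤ 1 / (k:ℝ))
    calc (‖b ^ k‖₊ : ℝ≥0∞) ^ (1 / (k:ℝ))
        ≤ (ENNReal.ofReal C * ((‖a ^ k‖₊ : ℝ≥0∞)) ^ t) ^ (1 / (k:ℝ)) := h2
      _ = (ENNReal.ofReal C) ^ (1 / (k:ℝ)) * (((‖a ^ k‖₊ : ℝ≥0∞)) ^ (1 / (k:ℝ))) ^ t := by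
          rw [ENNReal.mul_rpow_of_nonneg _ _ (by positivity : (0:ℝ) ≤ 1 / (k:ℝ)),
            ← ENNReal.rpow_mul, ← ENNReal.rpow_mul, mul_comm t (1 / (k:ℝ))]
  -- limits
  have hga := spectrum.pow_nnnorm_pow_one_div_tendsto_nhds_spectralRadius a
  have hgb := spectrum.pow_nnnorm_pow_one_div_tendsto_nhds_spectralRadius b
  have hconst : Tendsto (fun k : ℕ => (ENNReal.ofReal C) ^ (1 / (k:ℝ))) atTop (nhds 1) := by
    have h0 : Tendsto (fun k : ℕ => 1 / (k:ℝ)) atTop (nhds 0) :=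
      tendsto_one_div_atTop_nhds_zero_nat
    have h1 : Tendsto (fun k : ℕ => C ^ (1 / (k:ℝ))) atTop (nhds 1) := by
      have := Filter.Tendsto.rpow (tendsto_const_nhds (x := C)) h0 (Or.inl hC0.ne')
      simpa using this
    have h2 : Tendsto (fun k : ℕ => ENNReal.ofReal (C ^ (1 / (k:ℝ)))) atTop
        (nhds (ENNReal.ofReal 1)) := (ENNReal.continuous_ofReal.tendsto 1).comp h1
    simp only [ENNReal.ofReal_one] at h2
    refine h2.congr fun k => ?_
    rw [ENNReal.ofReal_rpow_of_pos hC0]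
  have hat : Tendsto (fun k : ℕ => (((‖a ^ k‖₊ : ℝ≥0∞)) ^ (1 / (k:ℝ))) ^ t) atTop
      (nhds ((spectralRadius ℂ a) ^ t)) :=
    (ENNReal.continuous_rpow_const.tendsto _).comp hga
  have hw : Tendsto (fun k : ℕ => (ENNReal.ofReal C) ^ (1 / (k:ℝ)) *
      (((‖a ^ k‖₊ : ℝ≥0∞)) ^ (1 / (k:ℝ))) ^ t) atTop (nhds (1 * (spectralRadius ℂ a) ^ t)) :=
    ENNReal.Tendsto.mul hconst (Or.inl one_ne_zero) hat (Or.inr ENNReal.one_ne_top)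
  have hfin : spectralRadius ℂ b ≤ 1 * (spectralRadius ℂ a) ^ t :=
    le_of_tendsto_of_tendsto' hgb hw key
  rw [one_mul] at hfin
  rw [show specRad Q = spectralRadius ℂ b by rw [hbdef, aux_specRad_eq]; rfl,
    show specRad P = spectralRadius ℂ a by rw [hadef, aux_specRad_eq]; rfl]
  exact hfin

end Aux

theorem stmt4 {n m : ℕ} (K : Fin m → Matrix (Fin n) (Fin n) ℝ)
    (hK : ∀ t i j, 0 ≤ K t i j) (t : ℝ) (ht : 1 ≤ t) :
    specRad ((List.ofFn fun s => Matrix.of fun i j => (K s i j) ^ t).prod) ≤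
      specRad ((List.ofFn K).prod) ^ t := by
  have hmem : ∀ A ∈ List.ofFn K, ∀ i j, 0 ≤ A i j := by
    intro A hA i j
    rw [List.mem_ofFn] at hA
    obtain ⟨s, rfl⟩ := hA
    exact hK s i j
  have hlist : (List.ofFn fun s => Matrix.of fun i j => (K s i j) ^ t) =
      (List.ofFn K).map (fun A => Matrix.of fun i j => A i j ^ t) := by
    rw [List.map_ofFn]; rfl
  set P := (List.ofFn K).prod with hPdef
  set Q := (List.ofFn fun s => Matrix.of fun i j => (K s i j) ^ t).prod with hQdef
  have hP : ∀ i j, 0 ≤ P i j := aux_prod_nonneg _ hmem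
  have hQ : ∀ i j, 0 ≤ Q i j := by
    rw [hQdef, hlist]
    refine aux_prod_nonneg _ ?_
    intro B hB i j
    simp only [List.mem_map] at hB
    obtain ⟨A, hA, rfl⟩ := hB
    exact Real.rpow_nonneg (hmem A hA i j) t
  have hQP : ∀ i j, Q i j ≤ P i j ^ t := by
    rw [hQdef, hlist]
    exact aux_prod_le ht _ hmem
  exact aux_main ht hP hQ hQP
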